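/- The number of binary strings of length n in which every 1 has at least one neighboring 1 satisfies d_0 = 1, d_1 = 1, d_2 = 2, d_3 = 4, and d_n = 2 d_{n-1} - d_{n-2} + d_{n-3} for all n ≥ 4. -/

import Mathlib

/-- A bitstring is multus if every 1 has at least one neighboring 1. -/
def Multus {n : ℕ} (f : Fin n → Bool) : Prop :=
  ∀ i : Fin n, f i = true →
    ∃ j : Fin n, (j.val = i.val + 1 ∨ j.val + 1 = i.val) ∧ f j = true

/-- Number of multus bitstrings of length `n`. -/
noncomputable def multusCount (n : ℕ) : ℕ := Nat.card {f : Fin n → Bool // Multus f}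

/-- Multus relative to a left-context bit `c`: a `1` at position `0` may use `c` as
its left neighbor. -/
def MF (c : Bool) {n : ℕ} (f : Fin n → Bool) : Prop :=
  ∀ i : Fin n, f i = true →
    (i.val = 0 ∧ c = true) ∨
      ∃ j : Fin n, (j.val = i.val + 1 ∨ j.val + 1 = i.val) ∧ f j = true

lemma multus_iff_mf {n : ℕ} (f : Fin n → Bool) : Multus f ↔ MF false f := by
  constructor
  · intro h i hi
    exact Or.inr (h i hi)
  · intro h i hi
    rcases h i hi with ⟨_, hc⟩ | hj
    · simp at hc
    · exact hj

lemma mf_cons {n : ℕ} (c b : Bool) (f : Fin n → Bool) :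
    MF c (Fin.cons b f) ↔
      ((b = true → c = true ∨ ∃ j : Fin n, j.val = 0 ∧ f j = true)) ∧ MF b f := by
  constructor
  · intro H
    constructor
    · intro hb
      rcases H 0 (by simpa using hb) with ⟨_, hc⟩ | ⟨j, hj, hjv⟩
      · exact Or.inl hc
      · right
        refine j.cases ?_ ?_ hj hjv
        · intro hj0 _
          simp [Fin.val_zero] at hj0
        · intro j' hj' hfj'
          simp only [Fin.val_succ, Fin.val_zero] at hj'
          have hj0 : j'.val = 0 := by omega
          exact ⟨j', hj0, by simpa using hfj'⟩
    · intro i hfi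
      rcases H i.succ (by simpa using hfi) with ⟨h0, _⟩ | ⟨j, hj, hjv⟩
      · simp [Fin.val_succ] at h0
      · refine j.cases ?_ ?_ hj hjv
        · intro hj0 hb
          left
          simp only [Fin.val_zero, Fin.val_succ] at hj0
          have : i.val = 0 := by omega
          exact ⟨this, by simpa using hb⟩
        · intro j' hj' hfj'
          right
          simp only [Fin.val_succ] at hj'
          exact ⟨j', by omega, by simpa using hfj'⟩
  · rintro ⟨h1, h2⟩ i hi
    refine i.cases ?_ ?_ hi
    · intro hb
      rcases h1 (by simpa using hb) with hc | ⟨j, hj0, hfj⟩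
      · exact Or.inl ⟨rfl, hc⟩
      · exact Or.inr ⟨j.succ, Or.inl (by simp [Fin.val_succ, hj0]), by simpa using hfj⟩
    · intro i' hfi'
      rcases h2 i' (by simpa using hfi') with ⟨hi0, hb⟩ | ⟨j', hj', hfj'⟩
      · exact Or.inr ⟨0, Or.inr (by simp [Fin.val_succ, hi0]), by simpa using hb⟩
      · refine Or.inr ⟨j'.succ, ?_, by simpa using hfj'⟩
        simp only [Fin.val_succ]
        omega

/-- Split a subtype of `Bool × α` as a sum according to the first component. -/
def boolProdSubtypeEquiv {α : Type*} (P : Bool × α → Prop) :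
    {p : Bool × α // P p} ≃ {a : α // P (false, a)} ⊕ {a : α // P (true, a)} where
  toFun := fun p => match p with
    | ⟨(false, a), h⟩ => Sum.inl ⟨a, h⟩
    | ⟨(true, a), h⟩ => Sum.inr ⟨a, h⟩
  invFun := fun x => match x with
    | Sum.inl ⟨a, h⟩ => ⟨(false, a), h⟩
    | Sum.inr ⟨a, h⟩ => ⟨(true, a), h⟩
  left_inv := by rintro ⟨⟨b, a⟩, h⟩; cases b <;> rfl
  right_inv := by rintro (⟨a, h⟩ | ⟨a, h⟩) <;> rfl

lemma card_cons_split {n : ℕ} (Q : (Fin (n + 1) → Bool) → Prop) :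
    Nat.card {f : Fin (n + 1) → Bool // Q f} =
      Nat.card {f : Fin n → Bool // Q (Fin.cons false f)} +
        Nat.card {f : Fin n → Bool // Q (Fin.cons true f)} := by
  have e1 : {f : Fin (n + 1) → Bool // Q f} ≃
      {p : Bool × (Fin n → Bool) // Q (Fin.cons p.1 p.2)} := by
    refine (((Fin.consEquiv fun _ : Fin (n + 1) => Bool).symm).subtypeEquiv ?_)
    intro f
    have hf : Fin.cons (((Fin.consEquiv fun _ : Fin (n + 1) => Bool).symm) f).1 (((Fin.consEquiv fun _ : Fin (n + 1) => Bool).symm) f).2 = f :=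
      funext fun i => by
        refine i.cases ?_ ?_ <;> simp [Fin.consEquiv, Fin.tail]
    rw [hf]
  rw [Nat.card_congr (e1.trans (boolProdSubtypeEquiv _)), Nat.card_sum]

noncomputable def Dc (n : ℕ) : ℕ := Nat.card {f : Fin n → Bool // MF false f}
noncomputable def Cc (n : ℕ) : ℕ := Nat.card {f : Fin n → Bool // MF true f}
noncomputable def Ec (n : ℕ) : ℕ :=
  Nat.card {f : Fin n → Bool // (∃ j : Fin n, j.val = 0 ∧ f j = true) ∧ MF true f}

lemma multusCount_eq_Dc (n : ℕ) : multusCount n = Dc n :=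
  Nat.card_congr (Equiv.subtypeEquivRight multus_iff_mf)

lemma head_cons_iff {n : ℕ} (b : Bool) (f : Fin n → Bool) :
    (∃ j : Fin (n + 1), j.val = 0 ∧ (Fin.cons b f : Fin (n + 1) → Bool) j = true) ↔ b = true := by
  constructor
  · rintro ⟨j, hj0, hjv⟩
    have : j = 0 := Fin.ext (by simpa using hj0)
    rw [this] at hjv
    simpa using hjv
  · intro hb
    exact ⟨0, by simp, by simpa using hb⟩

lemma Dc_zero : Dc 0 = 1 := by
  haveI : Unique {f : Fin 0 → Bool // MF false f} :=
    ⟨⟨⟨Fin.elim0, fun i => i.elim0⟩⟩, fun f => Subtype.ext (funext fun i => i.elim0)⟩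
  exact Nat.card_unique

lemma Cc_zero : Cc 0 = 1 := by
  haveI : Unique {f : Fin 0 → Bool // MF true f} :=
    ⟨⟨⟨Fin.elim0, fun i => i.elim0⟩⟩, fun f => Subtype.ext (funext fun i => i.elim0)⟩
  exact Nat.card_unique

lemma Ec_zero : Ec 0 = 0 := by
  haveI : IsEmpty {f : Fin 0 → Bool //
      (∃ j : Fin 0, j.val = 0 ∧ f j = true) ∧ MF true f} := by
    refine ⟨fun f => ?_⟩
    obtain ⟨⟨j, _⟩, _⟩ := f.2
    exact j.elim0
  exact Nat.card_of_isEmpty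

lemma Dc_succ (n : ℕ) : Dc (n + 1) = Dc n + Ec n := by
  rw [show Dc (n + 1) = _ from card_cons_split (MF false)]
  congr 1
  · exact Nat.card_congr (Equiv.subtypeEquivRight fun f => by
      rw [mf_cons]; simp)
  · exact Nat.card_congr (Equiv.subtypeEquivRight fun f => by
      rw [mf_cons]; simp [and_comm])

lemma Cc_succ (n : ℕ) : Cc (n + 1) = Dc n + Cc n := by
  rw [show Cc (n + 1) = _ from card_cons_split (MF true)]
  congr 1
  · exact Nat.card_congr (Equiv.subtypeEquivRight fun f => by
      rw [mf_cons]; simp)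
  · exact Nat.card_congr (Equiv.subtypeEquivRight fun f => by
      rw [mf_cons]; simp)

lemma Ec_succ (n : ℕ) : Ec (n + 1) = Cc n := by
  rw [show Ec (n + 1) = _ from
    card_cons_split (fun f => (∃ j : Fin (n + 1), j.val = 0 ∧ f j = true) ∧ MF true f)]
  have h0 : Nat.card {f : Fin n → Bool //
      (∃ j : Fin (n + 1), j.val = 0 ∧ (Fin.cons false f : Fin (n + 1) → Bool) j = true) ∧
        MF true (Fin.cons false f)} = 0 := by
    haveI : IsEmpty {f : Fin n → Bool //
        (∃ j : Fin (n + 1), j.val = 0 ∧ (Fin.cons false f : Fin (n + 1) → Bool) j = true) ∧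
          MF true (Fin.cons false f)} := by
      refine ⟨fun f => ?_⟩
      have := (head_cons_iff false f.1).mp f.2.1
      simp at this
    exact Nat.card_of_isEmpty
  rw [h0, Nat.zero_add]
  exact Nat.card_congr (Equiv.subtypeEquivRight fun f => by
    rw [head_cons_iff, mf_cons]; simp)

theorem multus_count_recurrence :
    multusCount 0 = 1 ∧ multusCount 1 = 1 ∧ multusCount 2 = 2 ∧ multusCount 3 = 4 ∧
    (∀ n : ℕ, 4 ≤ n →
      (multusCount n : ℤ) =
        2 * multusCount (n - 1) - multusCount (n - 2) + multusCount (n - 3)) := by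
  have hD0 : Dc 0 = 1 := Dc_zero
  have hD1 : Dc 1 = 1 := by rw [Dc_succ, Dc_zero, Ec_zero]
  have hE1 : Ec 1 = 1 := by rw [Ec_succ, Cc_zero]
  have hD2 : Dc 2 = 2 := by rw [Dc_succ, hD1, hE1]
  have hE2 : Ec 2 = 2 := by rw [Ec_succ, Cc_succ, Dc_zero, Cc_zero]
  have hD3 : Dc 3 = 4 := by rw [Dc_succ, hD2, hE2]
  refine ⟨by rw [multusCount_eq_Dc, hD0], by rw [multusCount_eq_Dc, hD1],
    by rw [multusCount_eq_Dc, hD2], by rw [multusCount_eq_Dc, hD3], ?_⟩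
  intro n hn
  obtain ⟨m, rfl⟩ : ∃ m, n = m + 4 := ⟨n - 4, by omega⟩
  have key : Dc (m + 4) + Dc (m + 2) = 2 * Dc (m + 3) + Dc (m + 1) := by
    have h1 : Dc (m + 3) = Dc (m + 2) + Ec (m + 2) := Dc_succ (m + 2)
    have h2 : Dc (m + 4) = Dc (m + 3) + Ec (m + 3) := Dc_succ (m + 3)
    have h3 : Ec (m + 3) = Cc (m + 2) := Ec_succ (m + 2)
    have h4 : Cc (m + 2) = Dc (m + 1) + Cc (m + 1) := Cc_succ (m + 1)
    have h5 : Ec (m + 2) = Cc (m + 1) := Ec_succ (m + 1)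
    omega
  have e1 : m + 4 - 1 = m + 3 := by omega
  have e2 : m + 4 - 2 = m + 2 := by omega
  have e3 : m + 4 - 3 = m + 1 := by omega
  rw [e1, e2, e3]
  simp only [multusCount_eq_Dc]
  have := congrArg (fun x : ℕ => (x : ℤ)) key
  push_cast at this ⊢
  linarith
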